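/- Let q be a prime power and let H_1, …, H_n ∈ 𝔽_q^{rℓ×ℓ} (with r ≥ 2, ℓ ≥ 1) be the blocks of a parity-check matrix of an (n, n−r, ℓ) MDS array code over 𝔽_q, i.e., for every subset I ⊆ {1,…,n} with |I| = r the rℓ×rℓ block matrix [H_i]_{i∈I} is invertible. Then for every node i ∈ {1,…,n} and every matrix M ∈ 𝔽_q^{ℓ×rℓ} such that M·H_i is invertible, one has ∑_{j≠i} nz(M·H_j) ≥ ℓ(n−1) − (r−1)·(q^ℓ − 1)/(q − 1), where nz(A) denotes the number of nonzero columns of the matrix A. -/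

import Mathlib

open Module Finset
open Matrix

private lemma aux_pow_bound (q : ℕ) (hq : 1 ≤ q) : ∀ d : ℕ, d * (q - 1) + 1 ≤ q ^ d := by
  intro d
  induction d with
  | zero => simp
  | succ d ih =>
    have h1 : 1 ≤ q ^ d := Nat.one_le_pow _ _ hq
    have h2 : q ^ (d + 1) = q ^ d * q := pow_succ q d
    have h3 : q - 1 + 1 = q := Nat.sub_add_cancel hq
    nlinarith [Nat.mul_le_mul_right (q - 1) h1]

/-- Incidence-multiplicity lower bound on repair I/O, matrix form.
With the same MDS array-code setup as for repair bandwidth, for every node `i` and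
every repair matrix `M` (i.e. `M·H i` invertible),
`∑_{j ≠ i} nz (M·H j) ≥ ℓ(n-1) - (r-1)·(q^ℓ-1)/(q-1)` over the integers, where
`nz A` is the number of nonzero columns of `A`. -/
theorem repair_io_incidence_multiplicity_bound
    (q r ℓ n : ℕ) (hr : 2 ≤ r) (hℓ : 1 ≤ ℓ) (hn : 1 ≤ n)
    (F : Type*) [Field F] [Fintype F] [DecidableEq F] (hq : Fintype.card F = q)
    (H : Fin n → Matrix (Fin (r * ℓ)) (Fin ℓ) F)
    (hMDS : ∀ I : Finset (Fin n), I.card = r →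
      (Matrix.of fun a (p : {x // x ∈ I} × Fin ℓ) => H p.1.1 a p.2).rank = r * ℓ)
    (i : Fin n) (M : Matrix (Fin ℓ) (Fin (r * ℓ)) F) (hM : IsUnit (M * H i)) :
    ((ℓ : ℤ) * ((n : ℤ) - 1) - ((r : ℤ) - 1) * (((q ^ ℓ - 1) / (q - 1) : ℕ) : ℤ))
      ≤ ∑ j ∈ Finset.univ.erase i,
          (((Finset.univ.filter fun t : Fin ℓ => ∃ s, (M * H j) s t ≠ 0).card : ℤ)) := by
  classical
  have hq2 : 2 ≤ q := by
    rw [← hq]; exact Fintype.one_lt_card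
  set N : ℕ := (q ^ ℓ - 1) / (q - 1) with hNdef
  have hdvd : (q - 1) ∣ (q ^ ℓ - 1) := by
    simpa using Nat.sub_dvd_pow_sub_pow q 1 ℓ
  have hNmul : (q - 1) * N = q ^ ℓ - 1 := Nat.mul_div_cancel' hdvd
  -- the left kernels
  set Kj : Fin n → Submodule F (Fin ℓ → F) :=
    fun j => LinearMap.ker (Matrix.mulVecLin (M * H j)ᵀ) with hKj
  set d : Fin n → ℕ := fun j => Module.finrank F (Kj j) with hd
  -- nz bound per node
  have step1 : ∀ j : Fin n,
      ℓ ≤ (Finset.univ.filter fun t : Fin ℓ => ∃ s, (M * H j) s t ≠ 0).card + d j := by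
    intro j
    set S := (Finset.univ.filter fun t : Fin ℓ => ∃ s, (M * H j) s t ≠ 0) with hS
    have hrn : (M * H j)ᵀ.rank + d j = ℓ := by
      have h := LinearMap.finrank_range_add_finrank_ker (Matrix.mulVecLin (M * H j)ᵀ)
      rw [Module.finrank_fin_fun] at h
      exact h
    have hrk : (M * H j).rank ≤ S.card := by
      rw [Matrix.rank_eq_finrank_span_cols]
      have hle : Submodule.span F (Set.range (M * H j)ᵀ)
          ≤ Submodule.span F ((S.image fun t => (M * H j)ᵀ t : Finset (Fin ℓ → F)) : Set (Fin ℓ → F)) := by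
        rw [Submodule.span_le]
        rintro x ⟨t, rfl⟩
        by_cases ht : t ∈ S
        · exact Submodule.subset_span (by
            simp only [Finset.coe_image, Set.mem_image, Finset.mem_coe]
            exact ⟨t, ht, rfl⟩)
        · have hz : (M * H j)ᵀ t = 0 := by
            funext s
            have : ¬ ∃ s, (M * H j) s t ≠ 0 := by
              simpa [hS] using ht
            push_neg at this
            exact this s
          rw [hz]
          exact Submodule.zero_mem _
      calc Module.finrank F (Submodule.span F (Set.range (M * H j)ᵀ))
          ≤ Module.finrank F (Submodule.span F
              ((S.image fun t => (M * H j)ᵀ t : Finset (Fin ℓ → F)) : Set (Fin ℓ → F))) :=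
            Submodule.finrank_mono hle
        _ ≤ (S.image fun t => (M * H j)ᵀ t).card := finrank_span_finset_le_card _
        _ ≤ S.card := Finset.card_image_le
    have htr : (M * H j)ᵀ.rank = (M * H j).rank := Matrix.rank_transpose _
    omega
  -- multiplicity bound
  have step2 : ∀ y : Fin ℓ → F, y ≠ 0 →
      ((Finset.univ.erase i).filter fun j => y ∈ Kj j).card ≤ r - 1 := by
    intro y hy
    by_contra hcon
    push_neg at hcon
    have hle : r ≤ ((Finset.univ.erase i).filter fun j => y ∈ Kj j).card := by omega
    obtain ⟨I, hIsub, hIcard⟩ :=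
      Finset.exists_subset_card_eq (s := (Finset.univ.erase i).filter fun j => y ∈ Kj j) hle
    have hB := hMDS I hIcard
    set B := (Matrix.of fun a (p : {x // x ∈ I} × Fin ℓ) => H p.1.1 a p.2) with hBdef
    set w : Fin (r * ℓ) → F := y ᵥ* M with hw
    have hwH : ∀ j ∈ I, w ᵥ* (H j) = 0 := by
      intro j hj
      have hmem : y ∈ Kj j := (Finset.mem_filter.1 (hIsub hj)).2
      have : (M * H j)ᵀ *ᵥ y = 0 := hmem
      rw [Matrix.mulVec_transpose] at this
      rw [hw, Matrix.vecMul_vecMul]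
      exact this
    have hwB : w ᵥ* B = 0 := by
      funext p
      have := congrFun (hwH p.1.1 p.1.2) p.2
      simpa [hBdef, Matrix.vecMul, dotProduct] using this
    have hker : LinearMap.ker (Matrix.mulVecLin Bᵀ) = ⊥ := by
      have h := LinearMap.finrank_range_add_finrank_ker (Matrix.mulVecLin Bᵀ)
      rw [Module.finrank_fin_fun] at h
      have hrkB : Bᵀ.rank = r * ℓ := by rw [Matrix.rank_transpose]; exact hB
      have : Module.finrank F (LinearMap.ker (Matrix.mulVecLin Bᵀ)) = 0 := by
        have : Bᵀ.rank = Module.finrank F (LinearMap.range (Matrix.mulVecLin Bᵀ)) := rfl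
        omega
      exact Submodule.finrank_eq_zero.1 this
    have hw0 : w = 0 := by
      have : w ∈ LinearMap.ker (Matrix.mulVecLin Bᵀ) := by
        have : Bᵀ *ᵥ w = 0 := by rw [Matrix.mulVec_transpose]; exact hwB
        exact this
      rwa [hker, Submodule.mem_bot] at this
    have hyMHi : y ᵥ* (M * H i) = 0 := by
      rw [← Matrix.vecMul_vecMul, ← hw, hw0, Matrix.zero_vecMul]
    have := hM.invertible
    have : y = 0 := by
      have h1 : y ᵥ* ((M * H i) * ⅟(M * H i)) = 0 := by
        rw [← Matrix.vecMul_vecMul, hyMHi, Matrix.zero_vecMul]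
      rwa [mul_invOf_self, Matrix.vecMul_one] at h1
    exact hy this
  -- cardinality of kernels
  have step3 : ∀ j : Fin n,
      ((Finset.univ.erase (0 : Fin ℓ → F)).filter fun y => y ∈ Kj j).card + 1 = q ^ d j := by
    intro j
    have he : ((Finset.univ.erase (0 : Fin ℓ → F)).filter fun y => y ∈ Kj j)
        = (Finset.univ.filter fun y => y ∈ Kj j).erase 0 := by
      ext y
      simp [Finset.mem_erase, Finset.mem_filter, and_comm, and_assoc, and_left_comm]
    have h0 : (0 : Fin ℓ → F) ∈ Finset.univ.filter fun y => y ∈ Kj j := by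
      simp [Submodule.zero_mem]
    have hcard : (Finset.univ.filter fun y => y ∈ Kj j).card = q ^ d j := by
      rw [← Fintype.card_subtype]
      rw [show Fintype.card {y : Fin ℓ → F // y ∈ Kj j} = q ^ d j from ?_]
      have := card_eq_pow_finrank (K := F) (V := {y : Fin ℓ → F // y ∈ Kj j})
      rw [this, hq]
    rw [he, Finset.card_erase_of_mem h0, hcard]
    have : 1 ≤ q ^ d j := Nat.one_le_pow _ _ (by omega)
    omega
  -- double counting
  have step4 : ∑ j ∈ Finset.univ.erase i,
      ((Finset.univ.erase (0 : Fin ℓ → F)).filter fun y => y ∈ Kj j).card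
      ≤ (r - 1) * (q ^ ℓ - 1) := by
    have hswap : ∑ j ∈ Finset.univ.erase i,
        ((Finset.univ.erase (0 : Fin ℓ → F)).filter fun y => y ∈ Kj j).card
        = ∑ y ∈ Finset.univ.erase (0 : Fin ℓ → F),
            ((Finset.univ.erase i).filter fun j => y ∈ Kj j).card := by
      simp_rw [Finset.card_filter]
      exact Finset.sum_comm
    rw [hswap]
    have hcard0 : (Finset.univ.erase (0 : Fin ℓ → F)).card = q ^ ℓ - 1 := by
      rw [Finset.card_erase_of_mem (Finset.mem_univ _), Finset.card_univ,
        Fintype.card_fun, hq, Fintype.card_fin]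
    calc ∑ y ∈ Finset.univ.erase (0 : Fin ℓ → F),
          ((Finset.univ.erase i).filter fun j => y ∈ Kj j).card
        ≤ ∑ y ∈ Finset.univ.erase (0 : Fin ℓ → F), (r - 1) := by
          apply Finset.sum_le_sum
          intro y hy
          exact step2 y (Finset.ne_of_mem_erase hy)
      _ = (q ^ ℓ - 1) * (r - 1) := by rw [Finset.sum_const, smul_eq_mul, hcard0]
      _ = (r - 1) * (q ^ ℓ - 1) := Nat.mul_comm _ _
  -- sum of kernel dimensions
  have step5 : (∑ j ∈ Finset.univ.erase i, d j) ≤ (r - 1) * N := by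
    have hterm : ∀ j : Fin n, d j * (q - 1)
        ≤ ((Finset.univ.erase (0 : Fin ℓ → F)).filter fun y => y ∈ Kj j).card := by
      intro j
      have := aux_pow_bound q (by omega) (d j)
      have h3 := step3 j
      omega
    have h1 : (∑ j ∈ Finset.univ.erase i, d j) * (q - 1) ≤ (r - 1) * (q ^ ℓ - 1) := by
      rw [Finset.sum_mul]
      exact le_trans (Finset.sum_le_sum fun j _ => hterm j) step4
    have h2 : (r - 1) * (q ^ ℓ - 1) = ((r - 1) * N) * (q - 1) := by
      rw [← hNmul]; ring
    rw [h2] at h1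
    exact Nat.le_of_mul_le_mul_right h1 (by omega)
  -- assemble in ℕ
  have hcardE : (Finset.univ.erase i).card = n - 1 := by
    rw [Finset.card_erase_of_mem (Finset.mem_univ _), Finset.card_univ, Fintype.card_fin]
  have key : ℓ * (n - 1)
      ≤ (∑ j ∈ Finset.univ.erase i,
          (Finset.univ.filter fun t : Fin ℓ => ∃ s, (M * H j) s t ≠ 0).card) + (r - 1) * N := by
    calc ℓ * (n - 1) = ∑ _j ∈ Finset.univ.erase i, ℓ := by
          rw [Finset.sum_const, smul_eq_mul, hcardE, Nat.mul_comm]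
      _ ≤ ∑ j ∈ Finset.univ.erase i,
            ((Finset.univ.filter fun t : Fin ℓ => ∃ s, (M * H j) s t ≠ 0).card + d j) :=
          Finset.sum_le_sum fun j _ => step1 j
      _ = (∑ j ∈ Finset.univ.erase i,
            (Finset.univ.filter fun t : Fin ℓ => ∃ s, (M * H j) s t ≠ 0).card)
          + ∑ j ∈ Finset.univ.erase i, d j := Finset.sum_add_distrib
      _ ≤ _ := by omega
  -- cast to ℤ
  have hcast : ((ℓ * (n - 1) : ℕ) : ℤ)
      ≤ ((∑ j ∈ Finset.univ.erase i,
          (Finset.univ.filter fun t : Fin ℓ => ∃ s, (M * H j) s t ≠ 0).card : ℕ) : ℤ)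
        + (((r - 1) * N : ℕ) : ℤ) := by exact_mod_cast key
  rw [Nat.cast_sum] at hcast
  have h1 : ((n - 1 : ℕ) : ℤ) = (n : ℤ) - 1 := by
    have : (1 : ℕ) ≤ n := hn; push_cast [Nat.cast_sub this]; ring
  have h2 : ((r - 1 : ℕ) : ℤ) = (r : ℤ) - 1 := by
    have : (1 : ℕ) ≤ r := by omega
    push_cast [Nat.cast_sub this]; ring
  push_cast at hcast
  rw [Nat.cast_sub hn, Nat.cast_sub (show (1:ℕ) ≤ r by omega)] at hcast
  push_cast at hcast
  linarith
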